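/- Let Γ = (V,E) be a reduced nonbipartite finite simple graph of diameter 2 which contains no triangles. Then Γ² equals the complement graph Γ^C, and consequently Aut^π(Γ) = Aut(Γ) (i.e. Γ is stable). -/

import Mathlib

open SimpleGraph

/-- A graph is reduced (vertex determining) if distinct vertices have distinct
open neighborhoods. -/
def Reduced {V : Type*} (G : SimpleGraph V) : Prop :=
  ∀ u v : V, G.neighborSet u = G.neighborSet v → u = v

/-- The group of two-fold projections of a graph: permutations mapping every
open neighborhood onto some open neighborhood. -/
def autPi {V : Type*} [Fintype V] (G : SimpleGraph V) : Subgroup (Equiv.Perm V) where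
  carrier := {π : Equiv.Perm V | ∀ v : V, ∃ w : V, π '' G.neighborSet v = G.neighborSet w}
  one_mem' := by
    intro v
    exact ⟨v, by simp⟩
  mul_mem' := by
    intro a b ha hb v
    obtain ⟨w, hw⟩ := hb v
    obtain ⟨u, hu⟩ := ha w
    refine ⟨u, ?_⟩
    rw [Equiv.Perm.coe_mul, Set.image_comp, hw, hu]
  inv_mem' := by
    intro a ha v
    have hfin : (Set.range G.neighborSet).Finite := Set.finite_range _
    have hmaps : Set.MapsTo (Set.image ⇑a) (Set.range G.neighborSet)
        (Set.range G.neighborSet) := by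
      rintro s ⟨u, rfl⟩
      obtain ⟨w, hw⟩ := ha u
      exact ⟨w, hw.symm⟩
    have hinj : Set.InjOn (Set.image ⇑a) (Set.range G.neighborSet) :=
      (Set.image_injective.mpr a.injective).injOn
    have hbij := (hfin.injOn_iff_bijOn_of_mapsTo hmaps).mp hinj
    obtain ⟨s, hs, hsv⟩ := hbij.surjOn ⟨v, rfl⟩
    obtain ⟨w, rfl⟩ := hs
    refine ⟨w, ?_⟩
    have : (⇑a⁻¹) '' ((⇑a) '' G.neighborSet w) = G.neighborSet w := by
      rw [← Set.image_comp]
      simp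
    rw [← this, hsv]

/-- The automorphism group of a graph, as a subgroup of the permutations of its vertices. -/
def autG {V : Type*} [Fintype V] (G : SimpleGraph V) : Subgroup (Equiv.Perm V) where
  carrier := {π : Equiv.Perm V | ∀ v w : V, G.Adj (π v) (π w) ↔ G.Adj v w}
  one_mem' := by intro v w; rfl
  mul_mem' := by
    intro a b ha hb v w
    rw [Equiv.Perm.coe_mul, Function.comp_apply, Function.comp_apply, ha, hb]
  inv_mem' := by
    intro a ha v w
    conv_rhs => rw [← (show a (a⁻¹ v) = v from Equiv.apply_symm_apply a v), ← (show a (a⁻¹ w) = w from Equiv.apply_symm_apply a w)]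
    rw [ha]

/-- The square of a graph: distinct vertices are adjacent iff they have a common neighbor. -/
def square {V : Type*} (G : SimpleGraph V) : SimpleGraph V where
  Adj v w := v ≠ w ∧ ∃ u, G.Adj v u ∧ G.Adj u w
  symm := ⟨fun v w h => ⟨h.1.symm, h.2.choose, h.2.choose_spec.2.symm, h.2.choose_spec.1.symm⟩⟩
  loopless := ⟨fun v h => h.1 rfl⟩

lemma autPi_mono_square {V : Type*} [Fintype V] {G : SimpleGraph V} {π : Equiv.Perm V}
    (hπ : ∀ v : V, ∃ w : V, π '' G.neighborSet v = G.neighborSet w)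
    {v w : V} (h : (square G).Adj v w) : (square G).Adj (π v) (π w) := by
  obtain ⟨hne, u, h1, h2⟩ := h
  obtain ⟨w', hw'⟩ := hπ u
  refine ⟨fun he => hne (π.injective he), w', ?_, ?_⟩
  · have : π v ∈ G.neighborSet w' := hw' ▸ ⟨v, h1.symm, rfl⟩
    exact this.symm
  · have : π w ∈ G.neighborSet w' := hw' ▸ ⟨w, h2, rfl⟩
    exact this

/-- A reduced, nonbipartite, triangle-free graph of diameter 2 satisfies Γ² = Γᶜ,
and consequently Aut^π(Γ) = Aut(Γ), i.e. Γ is stable. -/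
theorem stmt_8 {V : Type*} [Fintype V] (G : SimpleGraph V) (hred : Reduced G)
    (hnonbip : ∃ (v : V) (p : G.Walk v v), Odd p.length)
    (hdiam : G.ediam = 2) (htri : G.CliqueFree 3) :
    square G = Gᶜ ∧ autPi G = autG G := by
  have hsq : square G = Gᶜ := by
    ext v w
    show (v ≠ w ∧ ∃ u, G.Adj v u ∧ G.Adj u w) ↔ _
    rw [compl_adj]
    constructor
    · rintro ⟨hne, u, h1, h2⟩
      refine ⟨hne, fun hadj => ?_⟩
      classical
      exact htri {v, w, u} (is3Clique_triple_iff.mpr ⟨hadj, h1, h2.symm⟩)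
    · rintro ⟨hne, hnadj⟩
      refine ⟨hne, ?_⟩
      have hle : G.edist v w ≤ 2 := hdiam ▸ edist_le_ediam
      have h0 : G.edist v w ≠ 0 := fun h => hne (edist_eq_zero_iff.mp h)
      have h1 : G.edist v w ≠ 1 := fun h => hnadj (edist_eq_one_iff_adj.mp h)
      have h2 : G.edist v w = 2 := by
        have hlt : 1 < G.edist v w :=
          lt_of_le_of_ne (ENat.one_le_iff_ne_zero.mpr h0) (Ne.symm h1)
        have : (1 : ℕ∞) + 1 ≤ G.edist v w := Order.add_one_le_of_lt hlt
        exact le_antisymm hle (by rw [one_add_one_eq_two] at this; exact this)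
      obtain ⟨p, hp⟩ := exists_walk_of_edist_eq_coe (k := 2) (by exact_mod_cast h2)
      match p, hp with
      | SimpleGraph.Walk.cons h (SimpleGraph.Walk.cons h' SimpleGraph.Walk.nil), _ =>
        exact ⟨_, h, h'⟩
  refine ⟨hsq, ?_⟩
  ext π
  constructor
  · intro hπ
    have hπ' : ∀ v : V, ∃ w : V, π '' G.neighborSet v = G.neighborSet w := hπ
    have hπinv : (π⁻¹ : Equiv.Perm V) ∈ autPi G := (autPi G).inv_mem hπ
    intro v w
    have hiff : (square G).Adj (π v) (π w) ↔ (square G).Adj v w := by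
      constructor
      · intro h
        have := autPi_mono_square hπinv h
        simpa using this
      · exact autPi_mono_square hπ'
    rw [hsq] at hiff
    simp only [compl_adj] at hiff
    by_cases hvw : v = w
    · subst hvw; simp
    · have hne : π v ≠ π w := fun h => hvw (π.injective h)
      constructor
      · intro h; by_contra hn
        exact (hiff.mpr ⟨hvw, hn⟩).2 h
      · intro h; by_contra hn
        exact (hiff.mp ⟨hne, hn⟩).2 h
  · intro hπ v
    refine ⟨π v, ?_⟩
    ext u
    constructor
    · rintro ⟨x, hx, rfl⟩
      exact (hπ v x).mpr hx
    · intro hu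
      refine ⟨π⁻¹ u, ?_, by simp⟩
      have := (hπ v (π⁻¹ u)).mp
      simp only [show π (π⁻¹ u) = u from Equiv.apply_symm_apply π u] at this
      exact this hu
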